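/- Let (S, ≺) be a finite poset such that for every s ∈ S the set {t ∈ S : t ≺ s} is a chain (equivalently, the Hasse diagram of S is a forest with smaller elements closer to the roots). Suppose there is a bijection v : S → {1,…,m} such that s ≺ t implies v(s) > v(t), and such that for every s ∈ S the image v({t ∈ S : t ⪰ s}) is an interval of integers. Then there exist integers 0 < n₁ ≤ … ≤ n_m and an order isomorphism between (S, ≺) and the poset (Sc_n̄, ⪯) of staircase corners of Y_n̄. -/

import Mathlib

/-- Cells are pairs `(i, j)` (row `i`, column `j`, both 0-based); the Young diagram
`Y_n̄` consists of the cells with `j < m` and `i < n j`.  `IsSCorner n m Rr Rc c`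
says that, after removing the rows in `Rr` and the columns in `Rc` from `Y_n̄`,
the cell `c` is a corner of the remaining (renumbered) Young diagram: it is the
lowest remaining cell of its column and the leftmost remaining cell of its row. -/
def IsSCorner (n : ℕ → ℕ) (m : ℕ) (Rr Rc : Set ℕ) (c : ℕ × ℕ) : Prop :=
  c.2 < m ∧ c.1 < n c.2 ∧ c.1 ∉ Rr ∧ c.2 ∉ Rc ∧
  (∀ i, c.1 < i → i < n c.2 → i ∈ Rr) ∧
  (∀ j, j < c.2 → j ∉ Rc → n j ≤ c.1)

/-- An execution of the thin-hook removal process on `Y_n̄`: a list of cells, each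
of which is a corner of the diagram remaining after deleting the rows and columns
of the previously recorded cells, such that at the end every cell of `Y_n̄` lies
in a removed row or in a removed column (the diagram is empty). -/
def IsExec (n : ℕ → ℕ) (m : ℕ) (l : List (ℕ × ℕ)) : Prop :=
  (∀ t (ht : t < l.length),
    IsSCorner n m {i | ∃ c ∈ l.take t, c.1 = i} {j | ∃ c ∈ l.take t, c.2 = j}
      (l.get ⟨t, ht⟩)) ∧
  (∀ i j, j < m → i < n j → (∃ c ∈ l, c.1 = i) ∨ (∃ c ∈ l, c.2 = j))

/-- `S` is the set of staircase corners of `Y_n̄`: the recorded set of some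
execution of the thin-hook removal process. -/
def IsScSet (n : ℕ → ℕ) (m : ℕ) (S : Set (ℕ × ℕ)) : Prop :=
  ∃ l : List (ℕ × ℕ), IsExec n m l ∧ S = {c | c ∈ l}

/-- The partial order on staircase corners: `(i,j) ⪯ (i',j')` iff `i ≤ i'` and
`j' ≤ j` (to increase, move down and to the left). -/
def ScLE (c c' : ℕ × ℕ) : Prop := c.1 ≤ c'.1 ∧ c'.2 ≤ c.2

/-- A DL-dense array: an array supported on the staircase corners `S` which is
order-preserving for the staircase-corner order. -/
def DLDense (S : Set (ℕ × ℕ)) (R : ℕ × ℕ → ℕ) : Prop :=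
  (∀ c, c ∉ S → R c = 0) ∧ ∀ c c', c ∈ S → c' ∈ S → ScLE c c' → R c ≤ R c'

/-- Vertical weight of an array: the sum of the entries in column `j`. -/
def vrtW (n : ℕ → ℕ) (R : ℕ × ℕ → ℕ) (j : ℕ) : ℕ := ∑ i ∈ Finset.range (n j), R (i, j)

/-- Horizontal weight of an array: the sum of the entries in row `i`. -/
def horW (m : ℕ) (R : ℕ × ℕ → ℕ) (i : ℕ) : ℕ := ∑ j ∈ Finset.range m, R (i, j)


section StaircaseAux

variable {α : Type} [PartialOrder α] {m : ℕ}

/-- The auxiliary "row order" relation. -/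
def srel (v : α ≃ Fin m) (x y : α) : Prop :=
  x < y ∨ (¬ x ≤ y ∧ ¬ y ≤ x ∧ ((v x : ℕ) < (v y : ℕ)))

/-- Rank of an element in the row order. -/
noncomputable def srank (v : α ≃ Fin m) (x : α) : ℕ :=
  {y : α | srel v y x}.ncard

lemma srel_irrefl (v : α ≃ Fin m) (x : α) : ¬ srel v x x := by
  rintro (h | ⟨h1, h2, h3⟩)
  · exact lt_irrefl _ h
  · exact h1 le_rfl

lemma srel_asymm (v : α ≃ Fin m) {x y : α} (h : srel v x y) : ¬ srel v y x := by
  rintro (h' | ⟨h1', h2', h3'⟩)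
  · rcases h with h | ⟨h1, h2, h3⟩
    · exact lt_asymm h h'
    · exact h2 h'.le
  · rcases h with h | ⟨h1, h2, h3⟩
    · exact h2' h.le
    · omega

lemma srel_total (v : α ≃ Fin m) {x y : α} (hne : x ≠ y) : srel v x y ∨ srel v y x := by
  by_cases hxy : x ≤ y
  · exact Or.inl (Or.inl (lt_of_le_of_ne hxy hne))
  · by_cases hyx : y ≤ x
    · exact Or.inr (Or.inl (lt_of_le_of_ne hyx hne.symm))
    · rcases lt_trichotomy ((v x : ℕ)) ((v y : ℕ)) with h | h | h
      · exact Or.inl (Or.inr ⟨hxy, hyx, h⟩)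
      · exact absurd (v.injective (Fin.val_injective h)) hne
      · exact Or.inr (Or.inr ⟨hyx, hxy, h⟩)

lemma key_interval (v : α ≃ Fin m)
    (hint : ∀ s : α, ∃ a b : ℕ,
      ∀ k : Fin m, (a ≤ (k : ℕ) ∧ (k : ℕ) ≤ b) ↔ ∃ t : α, s ≤ t ∧ v t = k)
    {x y w : α} (hxy : x ≤ y) (h1 : (v y : ℕ) ≤ (v w : ℕ)) (h2 : (v w : ℕ) ≤ (v x : ℕ)) :
    x ≤ w := by
  obtain ⟨a, b, h⟩ := hint x
  obtain ⟨hax, hxb⟩ := (h (v x)).2 ⟨x, le_rfl, rfl⟩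
  obtain ⟨hay, hyb⟩ := (h (v y)).2 ⟨y, hxy, rfl⟩
  obtain ⟨t, hxt, hvt⟩ := (h (v w)).1 ⟨hay.trans h1, h2.trans hxb⟩
  exact (v.injective hvt) ▸ hxt

lemma vlt_of_lt (v : α ≃ Fin m) (hrev : ∀ s t : α, s < t → v t < v s)
    {x y : α} (h : x < y) : (v y : ℕ) < (v x : ℕ) := by
  have := hrev x y h
  exact Fin.lt_def.mp this

lemma srel_trans (v : α ≃ Fin m)
    (hrev : ∀ s t : α, s < t → v t < v s)
    (hint : ∀ s : α, ∃ a b : ℕ,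
      ∀ k : Fin m, (a ≤ (k : ℕ) ∧ (k : ℕ) ≤ b) ↔ ∃ t : α, s ≤ t ∧ v t = k)
    {x y z : α} (hxy : srel v x y) (hyz : srel v y z) : srel v x z := by
  rcases hxy with hxy | ⟨hnxy, hnyx, hvxy⟩
  · rcases hyz with hyz | ⟨hnyz, hnzy, hvyz⟩
    · exact Or.inl (hxy.trans hyz)
    · by_cases hxz : x ≤ z
      · rcases eq_or_lt_of_le hxz with rfl | h
        · exact absurd hxy.le hnzy
        · exact Or.inl h
      · by_cases hzx : z ≤ x
        · exact absurd (hzx.trans hxy.le) hnzy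
        · refine Or.inr ⟨hxz, hzx, ?_⟩
          by_contra hle
          push_neg at hle
          exact hxz (key_interval v hint hxy.le hvyz.le hle)
  · rcases hyz with hyz | ⟨hnyz, hnzy, hvyz⟩
    · by_cases hxz : x ≤ z
      · rcases eq_or_lt_of_le hxz with rfl | h
        · exact absurd hyz.le hnyx
        · exact Or.inl h
      · by_cases hzx : z ≤ x
        · exact absurd (hyz.le.trans hzx) hnyx
        · refine Or.inr ⟨hxz, hzx, ?_⟩
          by_contra hle
          push_neg at hle
          exact hnyx (key_interval v hint hyz.le hle hvxy.le)
    · by_cases hxz : x ≤ z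
      · rcases eq_or_lt_of_le hxz with rfl | h
        · exact absurd (hvxy.trans hvyz) (lt_irrefl _)
        · exact Or.inl h
      · by_cases hzx : z ≤ x
        · exact absurd (key_interval v hint hzx hvxy.le hvyz.le) hnzy
        · exact Or.inr ⟨hxz, hzx, hvxy.trans hvyz⟩

variable [Finite α]

lemma srank_lt_srank (v : α ≃ Fin m)
    (hrev : ∀ s t : α, s < t → v t < v s)
    (hint : ∀ s : α, ∃ a b : ℕ,
      ∀ k : Fin m, (a ≤ (k : ℕ) ∧ (k : ℕ) ≤ b) ↔ ∃ t : α, s ≤ t ∧ v t = k)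
    {x y : α} (h : srel v x y) : srank v x < srank v y := by
  apply Set.ncard_lt_ncard ?_ (Set.toFinite _)
  constructor
  · intro z hz
    exact srel_trans v hrev hint hz h
  · intro hsub
    exact srel_irrefl v x (hsub h)

lemma srank_lt_iff (v : α ≃ Fin m)
    (hrev : ∀ s t : α, s < t → v t < v s)
    (hint : ∀ s : α, ∃ a b : ℕ,
      ∀ k : Fin m, (a ≤ (k : ℕ) ∧ (k : ℕ) ≤ b) ↔ ∃ t : α, s ≤ t ∧ v t = k)
    {x y : α} : srel v x y ↔ srank v x < srank v y := by
  constructor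
  · exact srank_lt_srank v hrev hint
  · intro h
    rcases eq_or_ne x y with rfl | hne
    · exact absurd h (lt_irrefl _)
    · rcases srel_total v hne with h' | h'
      · exact h'
      · exact absurd (srank_lt_srank v hrev hint h') (by omega)

lemma srank_inj (v : α ≃ Fin m)
    (hrev : ∀ s t : α, s < t → v t < v s)
    (hint : ∀ s : α, ∃ a b : ℕ,
      ∀ k : Fin m, (a ≤ (k : ℕ) ∧ (k : ℕ) ≤ b) ↔ ∃ t : α, s ≤ t ∧ v t = k)
    {x y : α} (h : srank v x = srank v y) : x = y := by
  by_contra hne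
  rcases srel_total v hne with h' | h' <;>
    exact absurd (srank_lt_srank v hrev hint h') (by omega)

lemma srank_lt_card (v : α ≃ Fin m) (x : α) : srank v x < m := by
  have h1 : {y : α | srel v y x} ⊂ Set.univ := by
    constructor
    · exact Set.subset_univ _
    · intro hsub
      exact srel_irrefl v x (hsub (Set.mem_univ x))
  have := Set.ncard_lt_ncard h1 Set.finite_univ
  rwa [Set.ncard_univ, Nat.card_eq_of_equiv_fin v] at this

lemma srank_surj (v : α ≃ Fin m)
    (hrev : ∀ s t : α, s < t → v t < v s)
    (hint : ∀ s : α, ∃ a b : ℕ,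
      ∀ k : Fin m, (a ≤ (k : ℕ) ∧ (k : ℕ) ≤ b) ↔ ∃ t : α, s ≤ t ∧ v t = k)
    {r : ℕ} (hr : r < m) : ∃ x : α, srank v x = r := by
  set g : α → Fin m := fun x => ⟨srank v x, srank_lt_card v x⟩ with hg
  have hginj : Function.Injective g := by
    intro x y hxy
    exact srank_inj v hrev hint (congrArg Fin.val hxy)
  have hbij : Function.Bijective g := by
    rw [Nat.bijective_iff_injective_and_card]
    exact ⟨hginj, by rw [Nat.card_eq_of_equiv_fin v, Nat.card_eq_fintype_card, Fintype.card_fin]⟩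
  obtain ⟨x, hx⟩ := hbij.2 ⟨r, hr⟩
  exact ⟨x, congrArg Fin.val hx⟩

/-- The combinatorial core: an "interval in rank above x" sits inside the
strict upper set of x. -/
lemma upper_lt (v : α ≃ Fin m)
    (hchain : ∀ s : α, IsChain (· ≤ ·) {t : α | t < s})
    (hrev : ∀ s t : α, s < t → v t < v s)
    (hint : ∀ s : α, ∃ a b : ℕ,
      ∀ k : Fin m, (a ≤ (k : ℕ) ∧ (k : ℕ) ≤ b) ↔ ∃ t : α, s ≤ t ∧ v t = k)
    {x y z : α} (hxz : x ≤ z) (h1 : srank v x < srank v y) (h2 : srank v y ≤ srank v z) :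
    x < y := by
  have hxy : srel v x y := (srank_lt_iff v hrev hint).2 h1
  rcases hxy with h | ⟨hnxy, hnyx, hv⟩
  · exact h
  · exfalso
    rcases eq_or_lt_of_le h2 with he | hlt
    · have : y = z := srank_inj v hrev hint he
      subst this
      exact hnxy hxz
    · have hyz : srel v y z := (srank_lt_iff v hrev hint).2 hlt
      rcases hyz with h' | ⟨_, _, hv'⟩
      · have hxz' : x < z := by
          rcases eq_or_lt_of_le hxz with rfl | hh
          · exact absurd (srank_lt_srank v hrev hint (Or.inl h')) (by omega)
          · exact hh
        have hne : x ≠ y := fun he => hnxy (he ▸ le_rfl)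
        rcases hchain z hxz' h' hne with hle | hle
        · exact hnxy hle
        · exact hnyx hle
      · have hzx : (v z : ℕ) ≤ (v x : ℕ) := by
          rcases eq_or_lt_of_le hxz with rfl | hh
          · exact le_rfl
          · exact (vlt_of_lt v hrev hh).le
        omega

open Classical in
/-- Column lengths: one more than the largest rank in the upper set. -/
noncomputable def scol (v : α ≃ Fin m) [Fintype α] (x : α) : ℕ :=
  ((Finset.univ.filter (fun y => x ≤ y)).sup (srank v)) + 1

lemma scol_mono (v : α ≃ Fin m) [Fintype α]
    (hrev : ∀ s t : α, s < t → v t < v s)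
    (hint : ∀ s : α, ∃ a b : ℕ,
      ∀ k : Fin m, (a ≤ (k : ℕ) ∧ (k : ℕ) ≤ b) ↔ ∃ t : α, s ≤ t ∧ v t = k)
    {x x' : α} (h : (v x : ℕ) < (v x' : ℕ)) : scol v x ≤ scol v x' := by
  classical
  unfold scol
  have hx'mem : x' ∈ Finset.univ.filter (fun y => x' ≤ y) := by
    simp
  apply Nat.add_le_add_right
  apply Finset.sup_le
  intro z hz
  have hxz : x ≤ z := by simpa using hz
  have hvz : (v z : ℕ) ≤ (v x : ℕ) := by
    rcases eq_or_lt_of_le hxz with rfl | hh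
    · exact le_rfl
    · exact (vlt_of_lt v hrev hh).le
  by_cases hx'z : x' ≤ z
  · exact Finset.le_sup (by simpa using hx'z)
  · have hsr : srel v z x' := by
      by_cases hzx' : z ≤ x'
      · exact Or.inl (lt_of_le_not_ge hzx' hx'z)
      · exact Or.inr ⟨hzx', hx'z, by omega⟩
    exact le_trans (srank_lt_srank v hrev hint hsr).le (Finset.le_sup hx'mem)

end StaircaseAux

theorem realization_of_forest_posets (α : Type) [PartialOrder α]
    (m : ℕ) (v : α ≃ Fin m)
    (hchain : ∀ s : α, IsChain (· ≤ ·) {t : α | t < s})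
    (hrev : ∀ s t : α, s < t → v t < v s)
    (hint : ∀ s : α, ∃ a b : ℕ,
      ∀ k : Fin m, (a ≤ (k : ℕ) ∧ (k : ℕ) ≤ b) ↔ ∃ t : α, s ≤ t ∧ v t = k) :
    ∃ n : ℕ → ℕ, 0 < n 0 ∧ (∀ j k, j ≤ k → k < m → n j ≤ n k) ∧
      ∃ S : Set (ℕ × ℕ), IsScSet n m S ∧
        ∃ f : α → ℕ × ℕ, (∀ x, f x ∈ S) ∧ (∀ c ∈ S, ∃ x, f x = c) ∧
          ∀ x y : α, x ≤ y ↔ ScLE (f x) (f y) := by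
  classical
  haveI : Fintype α := Fintype.ofEquiv (Fin m) v.symm
  set n : ℕ → ℕ := fun j => if h : j < m then scol v (v.symm ⟨j, h⟩) else 1 with hn
  set l : List (ℕ × ℕ) := (List.finRange m).map (fun k => (srank v (v.symm k), (k : ℕ)))
    with hl
  have hlen : l.length = m := by simp [hl]
  have hget : ∀ (t : ℕ) (ht : t < m),
      l[t]'(by rw [hlen]; exact ht) = (srank v (v.symm ⟨t, ht⟩), t) := by
    intro t ht
    simp [hl]
  have htake : ∀ (t : ℕ), t ≤ m → ∀ c : ℕ × ℕ, c ∈ l.take t ↔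
      ∃ s : ℕ, ∃ hs : s < m, s < t ∧ c = (srank v (v.symm ⟨s, hs⟩), s) := by
    intro t htm c
    rw [List.mem_iff_getElem]
    constructor
    · rintro ⟨i, hi, rfl⟩
      have hi' : i < t := by
        have := (show (l.take t).length = min t l.length from List.length_take) ▸ hi
        omega
      have him : i < m := lt_of_lt_of_le hi' htm
      refine ⟨i, him, hi', ?_⟩
      rw [List.getElem_take]
      exact hget i him
    · rintro ⟨s, hs, hst, rfl⟩
      refine ⟨s, by rw [List.length_take, hlen]; omega, ?_⟩
      rw [List.getElem_take]
      exact hget s hs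
  refine ⟨n, ?_, ?_, {c | c ∈ l}, ⟨l, ⟨?_, ?_⟩, rfl⟩,
    fun x => (srank v x, (v x : ℕ)), ?_, ?_, ?_⟩
  · -- 0 < n 0
    simp only [hn]
    split
    · unfold scol; omega
    · exact Nat.one_pos
  · -- monotonicity
    intro j k hjk hkm
    have hjm : j < m := lt_of_le_of_lt hjk hkm
    simp only [hn, dif_pos hjm, dif_pos hkm]
    rcases eq_or_lt_of_le hjk with rfl | hlt
    · exact le_rfl
    · exact scol_mono v hrev hint (by simpa using hlt)
  · -- corners
    intro t ht
    have htm : t < m := hlen ▸ ht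
    have hc : l.get ⟨t, ht⟩ = (srank v (v.symm ⟨t, htm⟩), t) := by
      rw [List.get_eq_getElem]
      exact hget t htm
    rw [hc]
    set x := v.symm ⟨t, htm⟩ with hx
    refine ⟨htm, ?_, ?_, ?_, ?_, ?_⟩
    · -- in the column
      show srank v x < n t
      simp only [hn, dif_pos htm, ← hx]
      unfold scol
      have : srank v x ≤ (Finset.univ.filter (fun y => x ≤ y)).sup (srank v) :=
        Finset.le_sup (by simp)
      omega
    · -- row not removed
      rintro ⟨c', hmem, he⟩
      rw [htake t htm.le] at hmem
      obtain ⟨s, hs, hst, rfl⟩ := hmem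
      have : v.symm ⟨s, hs⟩ = x := srank_inj v hrev hint he
      rw [hx] at this
      have := v.symm.injective this
      have : s = t := congrArg Fin.val this
      omega
    · -- column not removed
      rintro ⟨c', hmem, he⟩
      rw [htake t htm.le] at hmem
      obtain ⟨s, hs, hst, rfl⟩ := hmem
      simp only at he
      omega
    · -- lowest in column
      intro r h1 h2
      simp only [hn, dif_pos htm, ← hx] at h2
      unfold scol at h2
      obtain ⟨z, hz, hsup⟩ := Finset.exists_mem_eq_sup
        (Finset.univ.filter (fun y => x ≤ y)) ⟨x, by simp⟩ (srank v)
      have hxz : x ≤ z := by simpa using hz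
      have hrz : r ≤ srank v z := by omega
      have hrm : r < m := lt_of_le_of_lt hrz (srank_lt_card v z)
      obtain ⟨y, hy⟩ := srank_surj v hrev hint hrm
      have h1' : srank v x < r := h1
      have hxy : x < y := upper_lt v hchain hrev hint hxz (hy ▸ h1') (hy ▸ hrz)
      have hvy : (v y : ℕ) < t := by
        have := vlt_of_lt v hrev hxy
        rwa [hx, Equiv.apply_symm_apply] at this
      refine ⟨(srank v (v.symm ⟨(v y : ℕ), (v y).isLt⟩), (v y : ℕ)), ?_, ?_⟩
      · exact (htake t htm.le _).2 ⟨(v y : ℕ), (v y).isLt, hvy, rfl⟩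
      · simp [hy]
    · -- leftmost in row
      intro j hj hnot
      exfalso
      apply hnot
      have hjm : j < m := hj.trans htm
      exact ⟨(srank v (v.symm ⟨j, hjm⟩), j), (htake t htm.le _).2 ⟨j, hjm, hj, rfl⟩, rfl⟩
  · -- emptiness
    intro i j hj _
    right
    exact ⟨(srank v (v.symm ⟨j, hj⟩), j),
      List.mem_map.2 ⟨⟨j, hj⟩, List.mem_finRange _, rfl⟩, rfl⟩
  · -- f maps into S
    intro x
    show _ ∈ l
    exact List.mem_map.2 ⟨v x, List.mem_finRange _, by simp⟩
  · -- f onto S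
    intro c hc
    obtain ⟨k, -, rfl⟩ := List.mem_map.1 hc
    exact ⟨v.symm k, by simp⟩
  · -- order iso
    intro x y
    constructor
    · intro h
      rcases eq_or_lt_of_le h with rfl | h'
      · exact ⟨le_rfl, le_rfl⟩
      · exact ⟨(srank_lt_srank v hrev hint (Or.inl h')).le, (vlt_of_lt v hrev h').le⟩
    · rintro ⟨h1, h2⟩
      simp only at h1 h2
      rcases eq_or_ne x y with rfl | hne
      · exact le_rfl
      · have h1' : srank v x < srank v y :=
          lt_of_le_of_ne h1 (fun he => hne (srank_inj v hrev hint he))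
        have hsr : srel v x y := (srank_lt_iff v hrev hint).2 h1'
        rcases hsr with h | ⟨_, _, hv⟩
        · exact h.le
        · exfalso
          have : (v y : ℕ) ≠ (v x : ℕ) :=
            fun he => hne (v.injective (Fin.val_injective he.symm))
          omega
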